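/- arXiv:1810.10248 — 2 statements merged into one kernel-verified Lean document; each statement's English description precedes it below -/
import Mathlib

section
/- For every real-valued f ∈ C¹([0,1]) and every integer n ≥ 1, the n-th iterate U^n f is differentiable on [0,1] and (U^n f)′(x) = (−1)^n V^n(f′)(x) for all x ∈ [0,1]. -/
open MeasureTheory Set Filter Topology

/-- The kernel P_{N,i}(x) = (x+N-1)/((x+i)(x+i-1)). -/
noncomputable def PNi (N i : ℕ) (x : ℝ) : ℝ :=
  (x + N - 1) / ((x + i) * (x + i - 1))

/-- The inverse branches u_{N,i}(x) = 1 - N/(x+i). -/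
noncomputable def uNi (N i : ℕ) (x : ℝ) : ℝ := 1 - (N : ℝ) / (x + i)

/-- The Perron–Frobenius operator U of R_N under ρ_N:
`U f(x) = Σ_{i ≥ N} P_{N,i}(x) f(u_{N,i}(x))`, indexed by i = N + k. -/
noncomputable def U (N : ℕ) (f : ℝ → ℝ) (x : ℝ) : ℝ :=
  ∑' k : ℕ, PNi N (N + k) x * f (uNi N (N + k) x)

/-- The operator V with (Uf)' = -V f':
`V g(x) = -Σ_{i ≥ N} [ (i+1-N)/(x+i)² ∫_{u_{N,i}(x)}^{u_{N,i+1}(x)} g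
          + N(x+N-1)/((x+i-1)(x+i)³) g(u_{N,i}(x)) ]`, indexed by i = N + k. -/
noncomputable def V (N : ℕ) (g : ℝ → ℝ) (x : ℝ) : ℝ :=
  -∑' k : ℕ,
    ((((N + k : ℕ) : ℝ) + 1 - N) / (x + ((N + k : ℕ) : ℝ)) ^ 2
        * (∫ u in (uNi N (N + k) x)..(uNi N (N + k + 1) x), g u)
      + ((N : ℝ) * (x + N - 1)) / ((x + ((N + k : ℕ) : ℝ) - 1) * (x + ((N + k : ℕ) : ℝ)) ^ 3)
        * g (uNi N (N + k) x))

noncomputable def dPk (N k : ℕ) (x : ℝ) : ℝ :=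
  ((k:ℝ)*(k+1) - (x+N-1)^2) / ((x+N+k) * (x+N+k-1))^2

noncomputable def bkk (N k : ℕ) (x : ℝ) : ℝ :=
  (N:ℝ)*(x+N-1) / ((x+N+k-1) * (x+N+k)^3)

noncomputable def Dk (N k : ℕ) (F F' : ℝ → ℝ) (x : ℝ) : ℝ :=
  dPk N k x * F (uNi N (N+k) x) + bkk N k x * F' (uNi N (N+k) x)

section basic
variable {N k : ℕ} {x : ℝ}

lemma hNr (hN : 2 ≤ N) : (2:ℝ) ≤ (N:ℝ) := by exact_mod_cast hN

lemma hkr (k : ℕ) : (0:ℝ) ≤ (k:ℝ) := Nat.cast_nonneg k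

lemma y_big (hN : 2 ≤ N) (hx : -(1:ℝ)/2 < x) : (k:ℝ) + 3/2 < x + N + k := by
  have := hNr hN; linarith

lemma y1_big (hN : 2 ≤ N) (hx : -(1:ℝ)/2 < x) : (k:ℝ) + 1/2 < x + N + k - 1 := by
  have := hNr hN; linarith

lemma a_big (hN : 2 ≤ N) (hx : -(1:ℝ)/2 < x) : (1:ℝ)/2 < x + N - 1 := by
  have := hNr hN; linarith

lemma uNi_eq (N k : ℕ) (x : ℝ) : uNi N (N+k) x = 1 - (N:ℝ)/(x + N + k) := by
  rw [uNi]; push_cast; ring_nf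

lemma u_mem (hN : 2 ≤ N) (hx : -(1:ℝ)/2 < x) : uNi N (N+k) x ∈ Icc (-1:ℝ) 1 := by
  rw [uNi_eq]
  have hNr := hNr hN
  have hkr := hkr k
  have hy : (0:ℝ) < x + N + k := by linarith
  constructor
  · have : (N:ℝ) / (x + N + k) ≤ 2 := by
      rw [div_le_iff₀ hy]; linarith
    linarith
  · have : (0:ℝ) ≤ (N:ℝ) / (x + N + k) := by positivity
    linarith

lemma u_mem01 (hN : 2 ≤ N) (hx : x ∈ Icc (0:ℝ) 1) : uNi N (N+k) x ∈ Icc (0:ℝ) 1 := by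
  obtain ⟨hx0, hx1⟩ := hx
  rw [uNi_eq]
  have hNr := hNr hN
  have hkr := hkr k
  have hy : (0:ℝ) < x + N + k := by linarith
  constructor
  · have : (N:ℝ) / (x + N + k) ≤ 1 := by
      rw [div_le_one hy]; linarith
    linarith
  · have : (0:ℝ) ≤ (N:ℝ) / (x + N + k) := by positivity
    linarith

end basic

section derivs
variable {N k : ℕ} {x : ℝ}

lemma hasDerivAt_uNi (hN : 2 ≤ N) (hx : -(1:ℝ)/2 < x) :
    HasDerivAt (fun x => uNi N (N+k) x) ((N:ℝ)/(x+N+k)^2) x := by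
  have hy : (0:ℝ) < x + N + k := by have := y_big (k := k) hN hx; linarith
  have h1 : HasDerivAt (fun x : ℝ => x + (((N+k:ℕ):ℝ))) 1 x := (hasDerivAt_id x).add_const _
  have h2 : HasDerivAt (fun x : ℝ => (N:ℝ) / (x + ((N+k:ℕ):ℝ)))
      ((0 * (x + ((N+k:ℕ):ℝ)) - (N:ℝ) * 1) / (x + ((N+k:ℕ):ℝ))^2) x := by
    refine (hasDerivAt_const x (N:ℝ)).div h1 ?_
    push_cast; intro h; nlinarith
  have h3 := h2.const_sub 1
  have : (fun x : ℝ => 1 - (N:ℝ) / (x + ((N+k:ℕ):ℝ))) = fun x => uNi N (N+k) x := by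
    funext y; rw [uNi]
  rw [this] at h3
  refine h3.congr_deriv ?_
  push_cast
  ring

lemma hasDerivAt_PNi (hN : 2 ≤ N) (hx : -(1:ℝ)/2 < x) :
    HasDerivAt (fun x => PNi N (N+k) x) (dPk N k x) x := by
  have hy : ((k:ℝ)) + 3/2 < x + N + k := y_big hN hx
  have hy1 : ((k:ℝ)) + 1/2 < x + N + k - 1 := y1_big hN hx
  have hkr := hkr k
  have hnum : HasDerivAt (fun x : ℝ => x + (N:ℝ) - 1) 1 x := by
    simpa [add_sub_assoc] using ((hasDerivAt_id x).add_const ((N:ℝ) - 1))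
  have hd1 : HasDerivAt (fun x : ℝ => x + ((N+k:ℕ):ℝ)) 1 x := (hasDerivAt_id x).add_const _
  have hd2 : HasDerivAt (fun x : ℝ => x + ((N+k:ℕ):ℝ) - 1) 1 x := by
    simpa [add_sub_assoc] using ((hasDerivAt_id x).add_const (((N+k:ℕ):ℝ) - 1))
  have hden : HasDerivAt (fun y : ℝ => (y + ((N+k:ℕ):ℝ)) * (y + ((N+k:ℕ):ℝ) - 1)) _ x := hd1.mul hd2
  have hdne : (x + ((N+k:ℕ):ℝ)) * (x + ((N+k:ℕ):ℝ) - 1) ≠ 0 := by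
    push_cast; intro h; nlinarith
  have h : HasDerivAt (fun y : ℝ => (y + (N:ℝ) - 1) / ((y + ((N+k:ℕ):ℝ)) * (y + ((N+k:ℕ):ℝ) - 1))) _ x := hnum.div hden hdne
  have : (fun x : ℝ => (x + (N:ℝ) - 1) / ((x + ((N+k:ℕ):ℝ)) * (x + ((N+k:ℕ):ℝ) - 1)))
      = fun x => PNi N (N+k) x := by
    funext y; rw [PNi]
  rw [this] at h
  convert h using 1
  rw [dPk]
  have h1 : (0:ℝ) < ((x + (N:ℝ) + k) * (x + (N:ℝ) + k - 1))^2 :=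
    pow_pos (mul_pos (by linarith) (by linarith)) 2
  have h2 : (0:ℝ) < ((x + ((N+k:ℕ):ℝ)) * (x + ((N+k:ℕ):ℝ) - 1))^2 := by
    push_cast; exact pow_pos (mul_pos (by linarith) (by linarith)) 2
  rw [div_eq_div_iff h1.ne' h2.ne']
  push_cast
  ring

lemma hasDerivAt_term (hN : 2 ≤ N) (hx : -(1:ℝ)/2 < x) {F F' : ℝ → ℝ}
    (hF : ∀ y, HasDerivAt F (F' y) y) :
    HasDerivAt (fun x => PNi N (N+k) x * F (uNi N (N+k) x)) (Dk N k F F' x) x := by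
  have hu := hasDerivAt_uNi (k := k) hN hx
  have hcomp : HasDerivAt (fun x => F (uNi N (N+k) x))
      (F' (uNi N (N+k) x) * ((N:ℝ)/(x+N+k)^2)) x := (hF _).comp x hu
  have h := (hasDerivAt_PNi (k := k) hN hx).mul hcomp
  refine h.congr_deriv ?_
  rw [Dk]
  have hbe : bkk N k x = PNi N (N+k) x * ((N:ℝ)/(x+(N:ℝ)+k)^2) := by
    rw [bkk, PNi]
    have hy : ((k:ℝ)) + 3/2 < x + N + k := y_big hN hx
    have hy1 : ((k:ℝ)) + 1/2 < x + N + k - 1 := y1_big hN hx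
    have hkr := hkr k
    have h1 : (0:ℝ) < (x + (N:ℝ) + k - 1) * (x + (N:ℝ) + k)^3 :=
      mul_pos (by linarith) (pow_pos (by linarith) 3)
    have h2 : (0:ℝ) < ((x + ((N+k:ℕ):ℝ)) * (x + ((N+k:ℕ):ℝ) - 1)) * (x+(N:ℝ)+k)^2 := by
      push_cast; exact mul_pos (mul_pos (by linarith) (by linarith)) (pow_pos (by linarith) 2)
    rw [div_mul_div_comm, div_eq_div_iff h1.ne' h2.ne']
    push_cast
    ring
  rw [hbe]
  ring

end derivs

section bounds
variable {N k : ℕ} {x : ℝ}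

lemma aux_dP (a kk : ℝ) (ha : 1/2 < a) (hk : 0 ≤ kk) :
    ((kk+1)^2 + a^2) * (kk+1)^2 ≤ 20 * ((a+kk+1)*(a+kk))^2 := by
  have h1 : (kk+1)^2 ≤ 4*(a+kk)^2 := by nlinarith
  have h2 : a^2 ≤ (a+kk)^2 := by nlinarith
  have h3 : ((a+kk)^2)^2 ≤ ((a+kk+1)*(a+kk))^2 := by nlinarith [sq_nonneg (a+kk)]
  have h4 : ((kk+1)^2 + a^2) * (kk+1)^2 ≤ (5*(a+kk)^2) * (4*(a+kk)^2) :=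
    mul_le_mul (by nlinarith) (by nlinarith) (by positivity) (by nlinarith)
  nlinarith [h3, h4]

lemma aux_bk (a kk : ℝ) (ha : 1/2 < a) (hk : 0 ≤ kk) :
    a * (kk+1)^2 ≤ (a+kk) * (a+kk+1)^3 := by
  have h1 : (kk+1)^2 ≤ (a+kk+1)^2 := by nlinarith
  have h2 : (a+kk+1)^2 ≤ (a+kk+1)^3 := by nlinarith
  exact mul_le_mul (by linarith) (by linarith) (by positivity) (by linarith)

lemma abs_dPk_le (hN : 2 ≤ N) (hx : -(1:ℝ)/2 < x) :
    |dPk N k x| ≤ 20 / ((k:ℝ)+1)^2 := by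
  have hy : ((k:ℝ)) + 3/2 < x + N + k := y_big hN hx
  have hy1 : ((k:ℝ)) + 1/2 < x + N + k - 1 := y1_big hN hx
  have ha : (1:ℝ)/2 < x + N - 1 := a_big hN hx
  have hkr := hkr k
  rw [dPk, abs_div]
  have hden : |((x + (N:ℝ) + k) * (x + (N:ℝ) + k - 1))^2|
      = ((x + (N:ℝ) + k) * (x + (N:ℝ) + k - 1))^2 := abs_of_pos
    (pow_pos (mul_pos (by linarith) (by linarith)) 2)
  rw [hden]
  rw [div_le_div_iff₀ (pow_pos (mul_pos (by linarith) (by linarith)) 2) (by positivity)]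
  have hnum : |(k:ℝ)*(k+1) - (x+N-1)^2| ≤ ((k:ℝ)+1)^2 + (x+N-1)^2 := by
    rw [abs_le]; constructor <;> nlinarith
  calc |(k:ℝ)*(k+1) - (x+N-1)^2| * ((k:ℝ)+1)^2
      ≤ (((k:ℝ)+1)^2 + (x+N-1)^2) * ((k:ℝ)+1)^2 := by
        apply mul_le_mul_of_nonneg_right hnum (by positivity)
    _ ≤ 20 * ((x + (N:ℝ) + k) * (x + (N:ℝ) + k - 1))^2 := by
        have := aux_dP (x + (N:ℝ) - 1) k ha hkr
        nlinarith [this]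

lemma abs_bkk_le (hN : 2 ≤ N) (hx : -(1:ℝ)/2 < x) :
    |bkk N k x| ≤ (N:ℝ) / ((k:ℝ)+1)^2 := by
  have hy : ((k:ℝ)) + 3/2 < x + N + k := y_big hN hx
  have hy1 : ((k:ℝ)) + 1/2 < x + N + k - 1 := y1_big hN hx
  have ha : (1:ℝ)/2 < x + N - 1 := a_big hN hx
  have hkr := hkr k
  have hNr := hNr hN
  rw [bkk, abs_div]
  have hdpos : (0:ℝ) < (x + (N:ℝ) + k - 1) * (x + (N:ℝ) + k)^3 :=
    mul_pos (by linarith) (pow_pos (by linarith) 3)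
  rw [abs_of_pos hdpos, abs_of_pos (by nlinarith : (0:ℝ) < (N:ℝ)*(x+N-1))]
  rw [div_le_div_iff₀ hdpos (by positivity)]
  have := aux_bk (x + (N:ℝ) - 1) k ha hkr
  nlinarith [this]

end bounds

section sums
variable {N k : ℕ} {x : ℝ}

lemma summable_inv_sq : Summable (fun k : ℕ => 1 / ((k:ℝ)+1)^2) := by
  have h : Summable (fun n : ℕ => 1 / (n:ℝ)^2) := Real.summable_one_div_nat_pow.2 one_lt_two
  have := (summable_nat_add_iff (f := fun n : ℕ => 1 / (n:ℝ)^2) 1).2 h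
  refine this.congr fun n => ?_
  push_cast
  ring_nf

lemma summable_c_div (C : ℝ) : Summable (fun k : ℕ => C / ((k:ℝ)+1)^2) := by
  have := summable_inv_sq.mul_left C
  refine this.congr fun n => ?_
  rw [mul_one_div]

lemma abs_Dk_le {F F' : ℝ → ℝ} {C0 C1 : ℝ}
    (hC0 : ∀ y ∈ Icc (-1:ℝ) 1, |F y| ≤ C0) (hC1 : ∀ y ∈ Icc (-1:ℝ) 1, |F' y| ≤ C1)
    (hN : 2 ≤ N) (hx : -(1:ℝ)/2 < x) :
    |Dk N k F F' x| ≤ (20*C0 + N*C1) / ((k:ℝ)+1)^2 := by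
  have hu := u_mem (N := N) (k := k) hN hx
  have hC0' := hC0 _ hu
  have hC1' := hC1 _ hu
  have h1 : |dPk N k x * F (uNi N (N+k) x)| ≤ (20 / ((k:ℝ)+1)^2) * C0 := by
    rw [abs_mul]
    exact mul_le_mul (abs_dPk_le hN hx) hC0' (abs_nonneg _) (by positivity)
  have h2 : |bkk N k x * F' (uNi N (N+k) x)| ≤ ((N:ℝ) / ((k:ℝ)+1)^2) * C1 := by
    rw [abs_mul]
    exact mul_le_mul (abs_bkk_le hN hx) hC1' (abs_nonneg _) (by positivity)
  calc |Dk N k F F' x| ≤ _ + _ := abs_add_le _ _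
    _ ≤ (20 / ((k:ℝ)+1)^2) * C0 + ((N:ℝ) / ((k:ℝ)+1)^2) * C1 := add_le_add h1 h2
    _ = (20*C0 + N*C1) / ((k:ℝ)+1)^2 := by ring

lemma summable_Dk {F F' : ℝ → ℝ} {C0 C1 : ℝ}
    (hC0 : ∀ y ∈ Icc (-1:ℝ) 1, |F y| ≤ C0) (hC1 : ∀ y ∈ Icc (-1:ℝ) 1, |F' y| ≤ C1)
    (hN : 2 ≤ N) (hx : -(1:ℝ)/2 < x) :
    Summable (fun k => Dk N k F F' x) := by
  refine Summable.of_norm_bounded (summable_c_div (20*C0 + N*C1)) fun k => ?_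
  exact abs_Dk_le hC0 hC1 hN hx

lemma summable_U_at_zero {F : ℝ → ℝ} {C0 : ℝ}
    (hC0 : ∀ y ∈ Icc (-1:ℝ) 1, |F y| ≤ C0) (hN : 2 ≤ N) :
    Summable (fun k : ℕ => PNi N (N+k) (0:ℝ) * F (uNi N (N+k) (0:ℝ))) := by
  have hx : -(1:ℝ)/2 < (0:ℝ) := by norm_num
  refine Summable.of_norm_bounded (summable_c_div ((N:ℝ) * C0)) fun k => ?_
  have hu := u_mem (N := N) (k := k) hN hx
  have hC0' := hC0 _ hu
  have hNr := hNr hN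
  have hkr := hkr k
  rw [Real.norm_eq_abs, abs_mul]
  have hP : |PNi N (N+k) (0:ℝ)| ≤ (N:ℝ) / ((k:ℝ)+1)^2 := by
    rw [PNi, abs_div]
    push_cast
    have hd : (0:ℝ) < ((0:ℝ) + ((N:ℝ)+k)) * ((0:ℝ) + ((N:ℝ)+k) - 1) :=
      mul_pos (by linarith) (by linarith)
    rw [abs_of_pos hd, abs_of_pos (by linarith : (0:ℝ) < (0:ℝ) + (N:ℝ) - 1)]
    rw [div_le_div_iff₀ hd (by positivity)]
    have e1 : ((k:ℝ)+1)^2 ≤ ((N:ℝ)+k-1)*((N:ℝ)+k) := by nlinarith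
    have e2 : ((0:ℝ)+N-1) * ((k:ℝ)+1)^2 ≤ (N:ℝ) * (((N:ℝ)+k-1)*((N:ℝ)+k)) :=
      mul_le_mul (by linarith) e1 (by positivity) (by linarith)
    nlinarith [e2]
  calc |PNi N (N+k) (0:ℝ)| * |F (uNi N (N+k) 0)| ≤ ((N:ℝ) / ((k:ℝ)+1)^2) * C0 := by
        have h0 : (0:ℝ) ≤ C0 := le_trans (abs_nonneg _) hC0'
        exact mul_le_mul hP hC0' (abs_nonneg _) (by positivity)
    _ = (N:ℝ) * C0 / ((k:ℝ)+1)^2 := by ring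

end sums

section derivU
variable {N : ℕ} {x : ℝ} {F F' : ℝ → ℝ} {C0 C1 : ℝ}

lemma hasDerivAt_U (hN : 2 ≤ N)
    (hF : ∀ y, HasDerivAt F (F' y) y)
    (hC0 : ∀ y ∈ Icc (-1:ℝ) 1, |F y| ≤ C0) (hC1 : ∀ y ∈ Icc (-1:ℝ) 1, |F' y| ≤ C1)
    (hx : -(1:ℝ)/2 < x) :
    HasDerivAt (U N F) (∑' k, Dk N k F F' x) x := by
  have h := hasDerivAt_tsum_of_isPreconnected
    (u := fun k : ℕ => (20*C0 + N*C1) / ((k:ℝ)+1)^2)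
    (g := fun k x => PNi N (N + k) x * F (uNi N (N + k) x))
    (g' := fun k x => Dk N k F F' x)
    (summable_c_div _) isOpen_Ioi (convex_Ioi (-(1:ℝ)/2)).isPreconnected
    (fun k y hy => hasDerivAt_term hN hy hF)
    (fun k y hy => abs_Dk_le hC0 hC1 hN hy)
    (by norm_num : (0:ℝ) ∈ Ioi (-(1:ℝ)/2))
    (summable_U_at_zero hC0 hN) hx
  exact h

end derivU

noncomputable def cseq (N : ℕ) (F : ℝ → ℝ) (x : ℝ) (k : ℕ) : ℝ :=
  (k:ℝ)/(x + N + k - 1)^2 * F (uNi N (N+k) x)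

section Videntity
variable {N : ℕ} {x : ℝ} {F F' : ℝ → ℝ} {C0 C1 : ℝ}

lemma dPk_split (hN : 2 ≤ N) (hx : -(1:ℝ)/2 < x) (k : ℕ) :
    dPk N k x = (k:ℝ)/(x + N + k - 1)^2 - ((k:ℝ)+1)/(x + N + k)^2 := by
  have hy : ((k:ℝ)) + 3/2 < x + N + k := y_big hN hx
  have hy1 : ((k:ℝ)) + 1/2 < x + N + k - 1 := y1_big hN hx
  have hkr := hkr k
  have h1 : (x + (N:ℝ) + k - 1)^2 ≠ 0 := (pow_pos (by linarith : (0:ℝ) < x + N + k - 1) 2).ne'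
  have h2 : (x + (N:ℝ) + k)^2 ≠ 0 := (pow_pos (by linarith : (0:ℝ) < x + N + k) 2).ne'
  rw [dPk, div_sub_div _ _ h1 h2, div_eq_div_iff
    (pow_pos (mul_pos (by linarith : (0:ℝ) < x + N + k) (by linarith : (0:ℝ) < x + N + k - 1)) 2).ne'
    (mul_pos (pow_pos (by linarith : (0:ℝ) < x + N + k - 1) 2) (pow_pos (by linarith : (0:ℝ) < x + N + k) 2)).ne']
  ring

lemma Vterm_eq (hN : 2 ≤ N) (hx : -(1:ℝ)/2 < x)
    (hF : ∀ y, HasDerivAt F (F' y) y) (hF'c : Continuous F') (k : ℕ) :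
    (((N + k : ℕ) : ℝ) + 1 - N) / (x + ((N + k : ℕ) : ℝ)) ^ 2
        * (∫ u in (uNi N (N + k) x)..(uNi N (N + k + 1) x), F' u)
      + ((N : ℝ) * (x + N - 1)) / ((x + ((N + k : ℕ) : ℝ) - 1) * (x + ((N + k : ℕ) : ℝ)) ^ 3)
        * F' (uNi N (N + k) x)
    = Dk N k F F' x + (cseq N F x (k+1) - cseq N F x k) := by
  have hFTC : (∫ u in (uNi N (N + k) x)..(uNi N (N + k + 1) x), F' u)
      = F (uNi N (N + k + 1) x) - F (uNi N (N + k) x) :=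
    intervalIntegral.integral_eq_sub_of_hasDerivAt (fun t _ => hF t)
      (hF'c.intervalIntegrable _ _)
  rw [hFTC, Dk, bkk, cseq, cseq, dPk_split hN hx k]
  simp only [show N + (k+1) = N + k + 1 from rfl]
  push_cast
  ring
end Videntity

section Vsum
variable {N : ℕ} {x : ℝ} {F F' : ℝ → ℝ} {C0 C1 : ℝ}

lemma Ediff_eq (hN : 2 ≤ N) (hx : -(1:ℝ)/2 < x) (k : ℕ) :
    cseq N F x (k+1) - cseq N F x k
      = (((k:ℝ)+1)/(x + N + k)^2) * (F (uNi N (N+k+1) x) - F (uNi N (N+k) x))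
        - dPk N k x * F (uNi N (N+k) x) := by
  rw [cseq, cseq, dPk_split hN hx k]
  simp only [show N + (k+1) = N + k + 1 from rfl]
  push_cast
  ring

lemma abs_u_diff_le (hN : 2 ≤ N) (hx : -(1:ℝ)/2 < x) (k : ℕ) :
    |uNi N (N+k+1) x - uNi N (N+k) x| ≤ (N:ℝ)/((k:ℝ)+1)^2 := by
  have hy : ((k:ℝ)) + 3/2 < x + N + k := y_big hN hx
  have hkr := hkr k
  have hNr := hNr hN
  have hp1 : (0:ℝ) < x + N + k := by linarith
  have hp2 : (0:ℝ) < x + N + k + 1 := by linarith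
  have h1 : uNi N (N+k+1) x - uNi N (N+k) x = (N:ℝ)/((x+N+k)*(x+N+k+1)) := by
    rw [show N + k + 1 = N + (k+1) from rfl, uNi_eq, uNi_eq]
    have e1 : x + (N:ℝ) + ((k:ℝ)+1) = x + N + k + 1 := by ring
    push_cast
    rw [e1]
    field_simp
    ring
  rw [h1, abs_of_pos (div_pos (by linarith) (mul_pos hp1 hp2))]
  rw [div_le_div_iff₀ (mul_pos hp1 hp2) (by positivity)]
  have e : ((k:ℝ)+1)^2 ≤ (x+N+k)*(x+N+k+1) := by nlinarith
  nlinarith [mul_le_mul_of_nonneg_left e (by linarith : (0:ℝ) ≤ (N:ℝ))]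

end Vsum

section Vsum2
variable {N : ℕ} {x : ℝ} {F F' : ℝ → ℝ} {C0 C1 : ℝ}

lemma abs_Ediff_le (hN : 2 ≤ N) (hx : -(1:ℝ)/2 < x)
    (hF : ∀ y, HasDerivAt F (F' y) y)
    (hC0 : ∀ y ∈ Icc (-1:ℝ) 1, |F y| ≤ C0) (hC1 : ∀ y ∈ Icc (-1:ℝ) 1, |F' y| ≤ C1)
    (k : ℕ) :
    |cseq N F x (k+1) - cseq N F x k| ≤ ((N:ℝ)*C1 + 20*C0)/((k:ℝ)+1)^2 := by
  have hy : ((k:ℝ)) + 3/2 < x + N + k := y_big hN hx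
  have hkr := hkr k
  have hNr := hNr hN
  have hC0nn : (0:ℝ) ≤ C0 := le_trans (abs_nonneg _) (hC0 0 (by norm_num))
  have hC1nn : (0:ℝ) ≤ C1 := le_trans (abs_nonneg _) (hC1 0 (by norm_num))
  rw [Ediff_eq hN hx k]
  have hu := u_mem (N := N) (k := k) hN hx
  have hu' : uNi N (N+k+1) x ∈ Icc (-1:ℝ) 1 := u_mem (N := N) (k := k+1) hN hx
  have hmvt : |F (uNi N (N+k+1) x) - F (uNi N (N+k) x)| ≤ C1 * |uNi N (N+k+1) x - uNi N (N+k) x| := by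
    have := (convex_Icc (-1:ℝ) 1).norm_image_sub_le_of_norm_hasDerivWithin_le
      (f := F) (f' := F') (fun y _ => (hF y).hasDerivWithinAt)
      (fun y hy => by rw [Real.norm_eq_abs]; exact hC1 y hy) hu hu'
    simpa [Real.norm_eq_abs] using this
  have hco : |((k:ℝ)+1)/(x + N + k)^2| ≤ 1 := by
    rw [abs_of_pos (div_pos (by linarith) (pow_pos (by linarith) 2))]
    rw [div_le_one (pow_pos (by linarith) 2)]
    nlinarith
  have h1 : |(((k:ℝ)+1)/(x + N + k)^2) * (F (uNi N (N+k+1) x) - F (uNi N (N+k) x))|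
      ≤ C1 * ((N:ℝ)/((k:ℝ)+1)^2) := by
    rw [abs_mul]
    calc |((k:ℝ)+1)/(x + N + k)^2| * |F (uNi N (N+k+1) x) - F (uNi N (N+k) x)|
        ≤ 1 * (C1 * |uNi N (N+k+1) x - uNi N (N+k) x|) :=
          mul_le_mul hco hmvt (abs_nonneg _) one_pos.le
      _ = C1 * |uNi N (N+k+1) x - uNi N (N+k) x| := one_mul _
      _ ≤ C1 * ((N:ℝ)/((k:ℝ)+1)^2) :=
          mul_le_mul_of_nonneg_left (abs_u_diff_le hN hx k) hC1nn
  have h2 : |dPk N k x * F (uNi N (N+k) x)| ≤ (20/((k:ℝ)+1)^2) * C0 := by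
    rw [abs_mul]
    exact mul_le_mul (abs_dPk_le hN hx) (hC0 _ hu) (abs_nonneg _) (by positivity)
  calc |_ - _| ≤ _ + _ := abs_sub _ _
    _ ≤ C1 * ((N:ℝ)/((k:ℝ)+1)^2) + (20/((k:ℝ)+1)^2) * C0 := add_le_add h1 h2
    _ = ((N:ℝ)*C1 + 20*C0)/((k:ℝ)+1)^2 := by ring

lemma summable_Ediff (hN : 2 ≤ N) (hx : -(1:ℝ)/2 < x)
    (hF : ∀ y, HasDerivAt F (F' y) y)
    (hC0 : ∀ y ∈ Icc (-1:ℝ) 1, |F y| ≤ C0) (hC1 : ∀ y ∈ Icc (-1:ℝ) 1, |F' y| ≤ C1) :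
    Summable (fun k => cseq N F x (k+1) - cseq N F x k) :=
  Summable.of_norm_bounded (summable_c_div ((N:ℝ)*C1 + 20*C0))
    (fun k => abs_Ediff_le hN hx hF hC0 hC1 k)

lemma tendsto_cseq (hN : 2 ≤ N) (hx : -(1:ℝ)/2 < x)
    (hC0 : ∀ y ∈ Icc (-1:ℝ) 1, |F y| ≤ C0) :
    Tendsto (cseq N F x) atTop (𝓝 0) := by
  have hC0nn : (0:ℝ) ≤ C0 := le_trans (abs_nonneg _) (hC0 0 (by norm_num))
  apply squeeze_zero_norm (a := fun n : ℕ => (4*C0)/((n:ℝ)+1))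
  · intro n
    have hy1 : ((n:ℝ)) + 1/2 < x + N + n - 1 := y1_big hN hx
    have hnr := hkr n
    have hu := u_mem (N := N) (k := n) hN hx
    rw [Real.norm_eq_abs, cseq, abs_mul]
    have hco : |(n:ℝ)/(x + N + n - 1)^2| ≤ 4/((n:ℝ)+1) := by
      rw [abs_of_nonneg (div_nonneg hnr (by positivity))]
      rw [div_le_div_iff₀ (pow_pos (by linarith) 2) (by positivity)]
      nlinarith
    calc |(n:ℝ)/(x + N + n - 1)^2| * |F (uNi N (N+n) x)| ≤ (4/((n:ℝ)+1)) * C0 :=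
          mul_le_mul hco (hC0 _ hu) (abs_nonneg _) (by positivity)
      _ = (4*C0)/((n:ℝ)+1) := by ring
  · have := tendsto_one_div_add_atTop_nhds_zero_nat.const_mul (4*C0)
    simpa [mul_one_div, div_eq_mul_inv] using this

lemma tsum_Ediff_zero (hN : 2 ≤ N) (hx : -(1:ℝ)/2 < x)
    (hF : ∀ y, HasDerivAt F (F' y) y)
    (hC0 : ∀ y ∈ Icc (-1:ℝ) 1, |F y| ≤ C0) (hC1 : ∀ y ∈ Icc (-1:ℝ) 1, |F' y| ≤ C1) :
    ∑' k, (cseq N F x (k+1) - cseq N F x k) = 0 := by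
  have hs := summable_Ediff hN hx hF hC0 hC1
  have h1 := hs.hasSum.tendsto_sum_nat
  have h2 : ∀ n, ∑ i ∈ Finset.range n, (cseq N F x (i+1) - cseq N F x i) = cseq N F x n := by
    intro n
    rw [Finset.sum_range_sub (f := cseq N F x)]
    simp [cseq]
  have hc : Tendsto (cseq N F x) atTop (𝓝 (∑' k, (cseq N F x (k+1) - cseq N F x k))) :=
    h1.congr h2
  exact tendsto_nhds_unique hc (tendsto_cseq hN hx hC0)

lemma V_eq_neg_tsum_Dk (hN : 2 ≤ N) (hx : -(1:ℝ)/2 < x)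
    (hF : ∀ y, HasDerivAt F (F' y) y) (hF'c : Continuous F')
    (hC0 : ∀ y ∈ Icc (-1:ℝ) 1, |F y| ≤ C0) (hC1 : ∀ y ∈ Icc (-1:ℝ) 1, |F' y| ≤ C1) :
    V N F' x = -∑' k, Dk N k F F' x := by
  rw [V]
  congr 1
  rw [tsum_congr (fun k => Vterm_eq hN hx hF hF'c k)]
  rw [Summable.tsum_add (summable_Dk hC0 hC1 hN hx) (summable_Ediff hN hx hF hC0 hC1)]
  rw [tsum_Ediff_zero hN hx hF hC0 hC1, add_zero]

end Vsum2

section contD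
variable {N : ℕ} {F F' : ℝ → ℝ} {C0 C1 : ℝ}

lemma contOn_aux (hN : 2 ≤ N) (k : ℕ) :
    ∀ x ∈ Ioi (-(1:ℝ)/2), x + ((N+k:ℕ):ℝ) ≠ 0 := by
  intro x hx
  have := y_big (k := k) hN (mem_Ioi.1 hx)
  push_cast
  have := hkr k
  intro h; nlinarith

lemma continuousOn_uNi (hN : 2 ≤ N) (k : ℕ) :
    ContinuousOn (fun x => uNi N (N+k) x) (Ioi (-(1:ℝ)/2)) := by
  simp only [uNi]
  exact continuousOn_const.sub (continuousOn_const.div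
    ((continuous_id.add continuous_const).continuousOn) (contOn_aux hN k))

lemma continuousOn_Dk (hN : 2 ≤ N) (hFc : Continuous F) (hF'c : Continuous F') (k : ℕ) :
    ContinuousOn (Dk N k F F') (Ioi (-(1:ℝ)/2)) := by
  have hne1 : ∀ x ∈ Ioi (-(1:ℝ)/2), ((x + (N:ℝ) + k) * (x + (N:ℝ) + k - 1))^2 ≠ 0 := by
    intro x hx
    have := y_big (k := k) hN (mem_Ioi.1 hx)
    have := y1_big (k := k) hN (mem_Ioi.1 hx)
    have := hkr k
    exact (pow_pos (mul_pos (by linarith) (by linarith)) 2).ne'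
  have hne2 : ∀ x ∈ Ioi (-(1:ℝ)/2), (x + (N:ℝ) + k - 1) * (x + (N:ℝ) + k)^3 ≠ 0 := by
    intro x hx
    have := y_big (k := k) hN (mem_Ioi.1 hx)
    have := y1_big (k := k) hN (mem_Ioi.1 hx)
    have := hkr k
    exact (mul_pos (by linarith) (pow_pos (by linarith) 3)).ne'
  have hdP : ContinuousOn (fun x => dPk N k x) (Ioi (-(1:ℝ)/2)) := by
    simp only [dPk]
    exact ContinuousOn.div (by fun_prop) (by fun_prop) hne1
  have hbk : ContinuousOn (fun x => bkk N k x) (Ioi (-(1:ℝ)/2)) := by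
    simp only [bkk]
    exact ContinuousOn.div (by fun_prop) (by fun_prop) hne2
  have hu := continuousOn_uNi hN k
  exact (hdP.mul (hFc.comp_continuousOn hu)).add (hbk.mul (hF'c.comp_continuousOn hu))

lemma continuousOn_tsum_Dk (hN : 2 ≤ N) (hFc : Continuous F) (hF'c : Continuous F')
    (hC0 : ∀ y ∈ Icc (-1:ℝ) 1, |F y| ≤ C0) (hC1 : ∀ y ∈ Icc (-1:ℝ) 1, |F' y| ≤ C1) :
    ContinuousOn (fun x => ∑' k, Dk N k F F' x) (Ioi (-(1:ℝ)/2)) := by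
  refine continuousOn_tsum (fun k => continuousOn_Dk hN hFc hF'c k)
    (summable_c_div (20*C0 + (N:ℝ)*C1)) (fun k x hx => ?_)
  exact abs_Dk_le hC0 hC1 hN (mem_Ioi.1 hx)

end contD

section congrs
variable {N : ℕ} {x : ℝ}

lemma U_congr (hN : 2 ≤ N) {F f : ℝ → ℝ} (hFf : EqOn F f (Icc (0:ℝ) 1))
    (hx : x ∈ Icc (0:ℝ) 1) : U N F x = U N f x :=
  tsum_congr fun k => by rw [hFf (u_mem01 hN hx)]

lemma V_congr (hN : 2 ≤ N) {G g : ℝ → ℝ} (hGg : EqOn G g (Icc (0:ℝ) 1))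
    (hx : x ∈ Icc (0:ℝ) 1) : V N G x = V N g x := by
  rw [V, V]
  congr 1
  refine tsum_congr fun k => ?_
  have h1 : uNi N (N+k) x ∈ Icc (0:ℝ) 1 := u_mem01 hN hx
  have h2 : uNi N (N+k+1) x ∈ Icc (0:ℝ) 1 := u_mem01 (k := k+1) hN hx
  congr 1
  · congr 1
    exact intervalIntegral.integral_congr fun t ht => hGg (uIcc_subset_Icc h1 h2 ht)
  · rw [hGg h1]

lemma V_const_mul (N : ℕ) (c : ℝ) (h : ℝ → ℝ) (x : ℝ) :
    V N (fun y => c * h y) x = c * V N h x := by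
  rw [V, V, mul_neg, ← tsum_mul_left]
  congr 1
  exact tsum_congr fun k => by rw [intervalIntegral.integral_const_mul]; ring

end congrs

lemma key (N : ℕ) (hN : 2 ≤ N) (f g : ℝ → ℝ)
    (hderiv : ∀ x ∈ Icc (0:ℝ) 1, HasDerivWithinAt f (g x) (Icc (0:ℝ) 1) x)
    (hcont : ContinuousOn g (Icc (0:ℝ) 1)) :
    (∀ x ∈ Icc (0:ℝ) 1, HasDerivWithinAt (U N f) (-(V N g x)) (Icc (0:ℝ) 1) x)
      ∧ ContinuousOn (V N g) (Icc (0:ℝ) 1) := by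
  classical
  set φ : ℝ → ℝ := fun x => max 0 (min 1 x) with hφ
  have hφc : Continuous φ := continuous_const.max (continuous_const.min continuous_id)
  have hφm : ∀ x, φ x ∈ Icc (0:ℝ) 1 := fun x =>
    ⟨le_max_left _ _, max_le (by norm_num) (min_le_left _ _)⟩
  have hφid : ∀ x ∈ Icc (0:ℝ) 1, φ x = x := by
    intro x hx
    simp only [hφ, min_eq_right hx.2, max_eq_right hx.1]
  set G : ℝ → ℝ := fun x => g (φ x) with hG
  have hGc : Continuous G := hcont.comp_continuous hφc hφm
  have hGeq : EqOn G g (Icc (0:ℝ) 1) := fun x hx => by simp only [hG, hφid x hx]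
  set F : ℝ → ℝ := fun x => f 0 + ∫ t in (0:ℝ)..x, G t with hFdef
  have hF : ∀ y, HasDerivAt F (G y) y := by
    intro y
    have h := intervalIntegral.integral_hasDerivAt_right
      (hGc.intervalIntegrable 0 y)
      hGc.stronglyMeasurable.stronglyMeasurableAtFilter
      hGc.continuousAt
    simpa [hFdef] using h.const_add (f 0)
  have hFc : Continuous F := continuous_iff_continuousAt.2 fun y => (hF y).continuousAt
  have hFeq : EqOn F f (Icc (0:ℝ) 1) := by
    intro x hx
    obtain ⟨hx0, hx1⟩ := hx
    have hsub : Icc (0:ℝ) x ⊆ Icc (0:ℝ) 1 := Icc_subset_Icc le_rfl hx1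
    have hint : ∫ t in (0:ℝ)..x, g t = f x - f 0 := by
      apply intervalIntegral.integral_eq_sub_of_hasDeriv_right_of_le hx0
      · exact fun t ht => ((hderiv t (hsub ht)).continuousWithinAt).mono hsub
      · intro t ht
        have hder := hderiv t ⟨ht.1.le, le_trans ht.2.le hx1⟩
        have : HasDerivAt f (g t) t :=
          hder.hasDerivAt (Icc_mem_nhds ht.1 (lt_of_lt_of_le ht.2 hx1))
        exact this.hasDerivWithinAt
      · exact (hcont.mono (by rw [uIcc_of_le hx0]; exact hsub)).intervalIntegrable
    have hGg : ∫ t in (0:ℝ)..x, G t = ∫ t in (0:ℝ)..x, g t :=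
      intervalIntegral.integral_congr fun t ht =>
        hGeq (uIcc_subset_Icc (by norm_num) ⟨hx0, hx1⟩ ht)
    simp only [hFdef, hGg, hint]
    ring
  obtain ⟨C0, hC0⟩ := isCompact_Icc.exists_bound_of_continuousOn
    (s := Icc (-1:ℝ) 1) hFc.continuousOn
  obtain ⟨C1, hC1⟩ := isCompact_Icc.exists_bound_of_continuousOn
    (s := Icc (-1:ℝ) 1) hGc.continuousOn
  have hC0' : ∀ y ∈ Icc (-1:ℝ) 1, |F y| ≤ C0 := fun y hy => hC0 y hy
  have hC1' : ∀ y ∈ Icc (-1:ℝ) 1, |G y| ≤ C1 := fun y hy => hC1 y hy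
  have hIoi : Icc (0:ℝ) 1 ⊆ Ioi (-(1:ℝ)/2) := fun y hy => by
    simp only [mem_Ioi]; linarith [hy.1]
  constructor
  · intro x hx
    have hx' : -(1:ℝ)/2 < x := hIoi hx
    have h1 : HasDerivWithinAt (U N F) (∑' k, Dk N k F G x) (Icc (0:ℝ) 1) x :=
      (hasDerivAt_U hN hF hC0' hC1' hx').hasDerivWithinAt
    have h2 : HasDerivWithinAt (U N f) (∑' k, Dk N k F G x) (Icc (0:ℝ) 1) x :=
      h1.congr (fun y hy => (U_congr hN hFeq hy).symm) (U_congr hN hFeq hx).symm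
    have h3 : -(V N g x) = ∑' k, Dk N k F G x := by
      rw [← V_congr hN hGeq hx, V_eq_neg_tsum_Dk hN hx' hF hGc hC0' hC1', neg_neg]
    rw [h3]
    exact h2
  · have hco : ContinuousOn (fun x => -∑' k, Dk N k F G x) (Icc (0:ℝ) 1) :=
      ((continuousOn_tsum_Dk hN hFc hGc hC0' hC1').mono hIoi).neg
    apply hco.congr
    intro x hx
    rw [← V_congr hN hGeq hx, V_eq_neg_tsum_Dk hN (hIoi hx) hF hGc hC0' hC1']

theorem stmt9 (N : ℕ) (hN : 2 ≤ N) (f f' : ℝ → ℝ)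
    (hderiv : ∀ x ∈ Set.Icc (0:ℝ) 1, HasDerivWithinAt f (f' x) (Set.Icc (0:ℝ) 1) x)
    (hcont : ContinuousOn f' (Set.Icc (0:ℝ) 1))
    (n : ℕ) (hn : 1 ≤ n) :
    ∀ x ∈ Set.Icc (0:ℝ) 1,
      HasDerivWithinAt ((U N)^[n] f) ((-1 : ℝ) ^ n * (V N)^[n] f' x)
        (Set.Icc (0:ℝ) 1) x := by
  have main : ∀ m : ℕ,
      (∀ x ∈ Set.Icc (0:ℝ) 1,
        HasDerivWithinAt ((U N)^[m] f) ((-1 : ℝ) ^ m * (V N)^[m] f' x) (Set.Icc (0:ℝ) 1) x)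
      ∧ ContinuousOn (fun x => (-1 : ℝ) ^ m * (V N)^[m] f' x) (Set.Icc (0:ℝ) 1) := by
    intro m
    induction m with
    | zero =>
      constructor
      · intro x hx
        simpa using hderiv x hx
      · simpa using hcont
    | succ m ih =>
      obtain ⟨ihd, ihc⟩ := ih
      obtain ⟨hd, hc⟩ := key N hN ((U N)^[m] f) (fun x => (-1 : ℝ) ^ m * (V N)^[m] f' x) ihd ihc
      have hval : ∀ x : ℝ, -(V N (fun x => (-1 : ℝ) ^ m * (V N)^[m] f' x) x)
          = (-1 : ℝ) ^ (m+1) * (V N)^[m+1] f' x := by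
        intro x
        rw [V_const_mul, Function.iterate_succ_apply' (V N) m f']
        ring
      constructor
      · intro x hx
        have h := hd x hx
        rw [hval x] at h
        rw [Function.iterate_succ_apply' (U N) m f]
        exact h
      · have := hc.neg
        apply this.congr
        intro x hx
        simp only []
        rw [← hval x]
        rfl
  exact (main n).1
end

section
/- Let v, w be constants with 0 < v ≤ w and let φ : [0,1] → ℝ be continuous with φ(x) ≤ 0 for all x, such that v(−φ(x)) ≤ Vφ(x) ≤ w(−φ(x)) for all x ∈ [0,1]. Then for every integer n ≥ 1 and every x ∈ [0,1], v^n (−φ(x)) ≤ (−1)^{n+1} V^n φ(x) ≤ w^n (−φ(x)), where V^n denotes the n-th iterate of V. -/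
open MeasureTheory Set Filter Topology

noncomputable def Vterm (N : ℕ) (g : ℝ → ℝ) (x : ℝ) (k : ℕ) : ℝ :=
  (((N + k : ℕ) : ℝ) + 1 - N) / (x + ((N + k : ℕ) : ℝ)) ^ 2
      * (∫ u in (uNi N (N + k) x)..(uNi N (N + k + 1) x), g u)
    + ((N : ℝ) * (x + N - 1)) / ((x + ((N + k : ℕ) : ℝ) - 1) * (x + ((N + k : ℕ) : ℝ)) ^ 3)
      * g (uNi N (N + k) x)

lemma V_eq_tsum (N : ℕ) (g : ℝ → ℝ) (x : ℝ) : V N g x = -∑' k, Vterm N g x k := rfl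

section facts
variable {N : ℕ} (hN : 2 ≤ N) {x : ℝ} (hx : x ∈ Set.Icc (0:ℝ) 1)

include hN hx

lemma hd_lb (k : ℕ) : (k:ℝ) + 2 ≤ x + ((N + k : ℕ) : ℝ) := by
  push_cast
  have h2 : (2:ℝ) ≤ N := by exact_mod_cast hN
  have := hx.1
  linarith

lemma hd_pos (k : ℕ) : (0:ℝ) < x + ((N + k : ℕ) : ℝ) := by
  have h := hd_lb hN hx k
  have : (0:ℝ) ≤ (k:ℝ) := Nat.cast_nonneg k
  linarith

lemma uNi_mem (k : ℕ) : uNi N (N + k) x ∈ Set.Icc (0:ℝ) 1 := by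
  have hd := hd_lb hN hx k
  have hdp := hd_pos hN hx k
  have hNx : (N:ℝ) ≤ x + ((N + k : ℕ) : ℝ) := by
    push_cast
    have := hx.1
    have : (0:ℝ) ≤ (k:ℝ) := Nat.cast_nonneg k
    have := hx.1
    linarith
  constructor
  · have h1 : (N:ℝ) / (x + ((N + k : ℕ) : ℝ)) ≤ 1 := by
      rw [div_le_one hdp]
      exact hNx
    simp only [uNi]
    linarith
  · have : (0:ℝ) ≤ (N:ℝ) / (x + ((N + k : ℕ) : ℝ)) := by positivity
    simp only [uNi]
    linarith

lemma uNi_mono (k : ℕ) : uNi N (N + k) x ≤ uNi N (N + k + 1) x := by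
  have hdp := hd_pos hN hx k
  have hdp1 : (0:ℝ) < x + ((N + k + 1 : ℕ) : ℝ) := by push_cast at hdp ⊢; linarith
  simp only [uNi]
  have : (N:ℝ) / (x + ((N + k + 1 : ℕ) : ℝ)) ≤ (N:ℝ) / (x + ((N + k : ℕ) : ℝ)) := by
    apply div_le_div_of_nonneg_left (by positivity) hdp
    push_cast; linarith
  linarith

lemma uNi_gap (k : ℕ) :
    uNi N (N + k + 1) x - uNi N (N + k) x ≤ (N:ℝ) / (((k:ℝ)+1) * ((k:ℝ)+1)) := by
  have hd := hd_lb hN hx k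
  have hdp := hd_pos hN hx k
  have hdp1 : (0:ℝ) < x + ((N + k + 1 : ℕ) : ℝ) := by push_cast at hdp ⊢; linarith
  have hsucc : x + ((N + k + 1 : ℕ) : ℝ) = (x + ((N + k : ℕ) : ℝ)) + 1 := by
    push_cast; ring
  have key : uNi N (N + k + 1) x - uNi N (N + k) x
      = (N:ℝ) / ((x + ((N + k : ℕ) : ℝ)) * (x + ((N + k + 1 : ℕ) : ℝ))) := by
    simp only [uNi]
    rw [hsucc]
    set d : ℝ := x + ((N + k : ℕ) : ℝ) with hdd
    have h1 : d ≠ 0 := hdp.ne'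
    have h2 : d + 1 ≠ 0 := by positivity
    field_simp
    ring
  rw [key]
  apply div_le_div_of_nonneg_left (by positivity) (by positivity)
  have hk1 : ((k:ℝ)+1) ≤ x + ((N + k : ℕ) : ℝ) := by linarith
  have hk2 : ((k:ℝ)+1) ≤ x + ((N + k + 1 : ℕ) : ℝ) := by push_cast at hk1 ⊢; linarith
  have h0 : (0:ℝ) < (k:ℝ)+1 := by positivity
  nlinarith

end facts

section coeff
variable {N : ℕ} (hN : 2 ≤ N) {x : ℝ} (hx : x ∈ Set.Icc (0:ℝ) 1)

lemma A_eq (k : ℕ) : (((N + k : ℕ) : ℝ) + 1 - N) = (k:ℝ) + 1 := by push_cast; ring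

include hN hx

lemma A_nonneg (k : ℕ) : 0 ≤ (((N + k : ℕ) : ℝ) + 1 - N) / (x + ((N + k : ℕ) : ℝ)) ^ 2 := by
  rw [A_eq]
  have := hd_pos hN hx k
  positivity

lemma A_le (k : ℕ) : (((N + k : ℕ) : ℝ) + 1 - N) / (x + ((N + k : ℕ) : ℝ)) ^ 2
    ≤ 1 / ((k:ℝ) + 1) := by
  rw [A_eq]
  have hd := hd_lb hN hx k
  have hdp := hd_pos hN hx k
  rw [div_le_div_iff₀ (by positivity) (by positivity)]
  nlinarith [Nat.cast_nonneg (α := ℝ) k]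

lemma B_nonneg (k : ℕ) :
    0 ≤ ((N : ℝ) * (x + N - 1)) / ((x + ((N + k : ℕ) : ℝ) - 1) * (x + ((N + k : ℕ) : ℝ)) ^ 3) := by
  have hd := hd_lb hN hx k
  have hdp := hd_pos hN hx k
  have h2 : (2:ℝ) ≤ N := by exact_mod_cast hN
  have hx0 := hx.1
  have hk : (0:ℝ) ≤ (k:ℝ) := Nat.cast_nonneg k
  have h1 : (0:ℝ) < x + ((N + k : ℕ) : ℝ) - 1 := by linarith
  have h2' : (0:ℝ) ≤ (N:ℝ) * (x + N - 1) := by nlinarith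
  positivity

lemma B_le (k : ℕ) :
    ((N : ℝ) * (x + N - 1)) / ((x + ((N + k : ℕ) : ℝ) - 1) * (x + ((N + k : ℕ) : ℝ)) ^ 3)
      ≤ (N:ℝ)^2 / (((k:ℝ) + 1) * ((k:ℝ) + 1)) := by
  have hd := hd_lb hN hx k
  have hdp := hd_pos hN hx k
  have h2 : (2:ℝ) ≤ N := by exact_mod_cast hN
  have hx0 := hx.1
  have hx1 := hx.2
  have hk : (0:ℝ) ≤ (k:ℝ) := Nat.cast_nonneg k
  apply div_le_div₀ (by positivity) (by nlinarith) (by positivity)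
  set d : ℝ := x + ((N + k : ℕ) : ℝ) with hdd
  have h1 : (k:ℝ) + 1 ≤ d - 1 := by linarith
  have h2' : (k:ℝ) + 1 ≤ d := by linarith
  calc ((k:ℝ) + 1) * ((k:ℝ) + 1) ≤ (d - 1) * d :=
        mul_le_mul h1 h2' (by positivity) (by linarith)
    _ ≤ (d - 1) * d ^ 3 := by
        have hd3 : d ≤ d ^ 3 := by
          have h4 : (1:ℝ) ≤ d := by linarith
          nlinarith [mul_le_mul_of_nonneg_left h4 hdp.le, sq_nonneg (d - 1)]
        exact mul_le_mul_of_nonneg_left hd3 (by linarith)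


lemma norm_Vterm_le {g : ℝ → ℝ} {M : ℝ}
    (hM : ∀ y ∈ Set.Icc (0:ℝ) 1, ‖g y‖ ≤ M) (k : ℕ) :
    ‖Vterm N g x k‖ ≤ (M * ((N:ℝ) + (N:ℝ)^2)) * (1 / ((k:ℝ) + 1) ^ 2) := by
  have hM0 : 0 ≤ M := le_trans (norm_nonneg _) (hM 0 ⟨le_rfl, zero_le_one⟩)
  have hmono := uNi_mono hN hx k
  have hu0 := uNi_mem hN hx k
  have hu1 := uNi_mem hN hx (k+1)
  have hu1' : uNi N (N + k + 1) x ∈ Set.Icc (0:ℝ) 1 := hu1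
  have hInt : ‖∫ u in (uNi N (N + k) x)..(uNi N (N + k + 1) x), g u‖
      ≤ M * |uNi N (N + k + 1) x - uNi N (N + k) x| := by
    apply intervalIntegral.norm_integral_le_of_norm_le_const
    intro y hy
    rw [Set.uIoc_of_le hmono] at hy
    exact hM y ⟨le_trans hu0.1 (le_of_lt hy.1), le_trans hy.2 hu1'.2⟩
  have habs : |uNi N (N + k + 1) x - uNi N (N + k) x|
      = uNi N (N + k + 1) x - uNi N (N + k) x := abs_of_nonneg (by linarith)
  have hgap := uNi_gap hN hx k
  set c : ℝ := (k:ℝ) + 1 with hc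
  have hc1 : (1:ℝ) ≤ c := by rw [hc]; linarith [Nat.cast_nonneg (α := ℝ) k]
  have hc0 : (0:ℝ) < c := by linarith
  have hA0 := A_nonneg hN hx k
  have hA := A_le hN hx k
  have hB0 := B_nonneg hN hx k
  have hB := B_le hN hx k
  have hgv : ‖g (uNi N (N + k) x)‖ ≤ M := hM _ hu0
  calc ‖Vterm N g x k‖
      ≤ ‖(((N + k : ℕ) : ℝ) + 1 - N) / (x + ((N + k : ℕ) : ℝ)) ^ 2
          * (∫ u in (uNi N (N + k) x)..(uNi N (N + k + 1) x), g u)‖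
        + ‖((N : ℝ) * (x + N - 1)) / ((x + ((N + k : ℕ) : ℝ) - 1) * (x + ((N + k : ℕ) : ℝ)) ^ 3)
          * g (uNi N (N + k) x)‖ := norm_add_le _ _
    _ ≤ (1 / c) * (M * ((N:ℝ) / (c * c))) + ((N:ℝ)^2 / (c * c)) * M := by
        rw [norm_mul, norm_mul]
        apply add_le_add
        · apply mul_le_mul (by rwa [Real.norm_eq_abs, abs_of_nonneg hA0])
            (le_trans hInt (by rw [habs]; exact mul_le_mul_of_nonneg_left hgap hM0))
            (norm_nonneg _) (by positivity)
        · apply mul_le_mul (by rwa [Real.norm_eq_abs, abs_of_nonneg hB0]) hgv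
            (norm_nonneg _) (by positivity)
    _ ≤ (M * ((N:ℝ) + (N:ℝ)^2)) * (1 / c ^ 2) := by
        have hcne : c ≠ 0 := hc0.ne'
        rw [← sub_nonneg]
        have key : (M * ((N:ℝ) + (N:ℝ)^2)) * (1 / c ^ 2)
            - ((1 / c) * (M * ((N:ℝ) / (c * c))) + ((N:ℝ)^2 / (c * c)) * M)
            = M * (N:ℝ) * (c - 1) / c ^ 3 := by
          field_simp
          ring
        rw [key]
        have : (0:ℝ) ≤ c - 1 := by linarith
        positivity

end coeff

lemma summable_bound (C : ℝ) : Summable (fun k : ℕ => C * (1 / ((k:ℝ) + 1) ^ 2)) := by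
  apply Summable.mul_left
  have h : Summable (fun n : ℕ => 1 / (n:ℝ) ^ 2) :=
    Real.summable_one_div_nat_pow.mpr one_lt_two
  have h2 := (summable_nat_add_iff 1).mpr h
  apply h2.congr
  intro n
  push_cast
  ring

lemma summable_Vterm {N : ℕ} (hN : 2 ≤ N) {x : ℝ} (hx : x ∈ Set.Icc (0:ℝ) 1)
    {g : ℝ → ℝ} {M : ℝ} (hM : ∀ y ∈ Set.Icc (0:ℝ) 1, ‖g y‖ ≤ M) :
    Summable (Vterm N g x) :=
  Summable.of_norm_bounded (summable_bound (M * ((N:ℝ) + (N:ℝ)^2)))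
    (norm_Vterm_le hN hx hM)

lemma Vterm_mono {N : ℕ} (hN : 2 ≤ N) {x : ℝ} (hx : x ∈ Set.Icc (0:ℝ) 1)
    {g h : ℝ → ℝ} (hg : ContinuousOn g (Set.Icc (0:ℝ) 1))
    (hh : ContinuousOn h (Set.Icc (0:ℝ) 1))
    (hle : ∀ y ∈ Set.Icc (0:ℝ) 1, g y ≤ h y) (k : ℕ) :
    Vterm N g x k ≤ Vterm N h x k := by
  have hmono := uNi_mono hN hx k
  have hu0 := uNi_mem hN hx k
  have hu1 : uNi N (N + k + 1) x ∈ Set.Icc (0:ℝ) 1 := uNi_mem hN hx (k+1)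
  have hsub : Set.uIcc (uNi N (N + k) x) (uNi N (N + k + 1) x) ⊆ Set.Icc (0:ℝ) 1 := by
    rw [Set.uIcc_of_le hmono]
    intro y hy
    exact ⟨le_trans hu0.1 hy.1, le_trans hy.2 hu1.2⟩
  have hig : IntervalIntegrable g volume (uNi N (N + k) x) (uNi N (N + k + 1) x) :=
    (hg.mono hsub).intervalIntegrable
  have hih : IntervalIntegrable h volume (uNi N (N + k) x) (uNi N (N + k + 1) x) :=
    (hh.mono hsub).intervalIntegrable
  have hIle : (∫ u in (uNi N (N + k) x)..(uNi N (N + k + 1) x), g u)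
      ≤ ∫ u in (uNi N (N + k) x)..(uNi N (N + k + 1) x), h u := by
    apply intervalIntegral.integral_mono_on hmono hig hih
    intro y hy
    exact hle y (hsub (by rw [Set.uIcc_of_le hmono]; exact hy))
  unfold Vterm
  apply add_le_add
  · exact mul_le_mul_of_nonneg_left hIle (A_nonneg hN hx k)
  · exact mul_le_mul_of_nonneg_left (hle _ hu0) (B_nonneg hN hx k)

lemma V_mono {N : ℕ} (hN : 2 ≤ N) {x : ℝ} (hx : x ∈ Set.Icc (0:ℝ) 1)
    {g h : ℝ → ℝ} (hg : ContinuousOn g (Set.Icc (0:ℝ) 1))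
    (hh : ContinuousOn h (Set.Icc (0:ℝ) 1))
    (hle : ∀ y ∈ Set.Icc (0:ℝ) 1, g y ≤ h y) :
    V N h x ≤ V N g x := by
  rw [V_eq_tsum, V_eq_tsum]
  apply neg_le_neg
  obtain ⟨Mg, hMg⟩ := isCompact_Icc.exists_bound_of_continuousOn hg
  obtain ⟨Mh, hMh⟩ := isCompact_Icc.exists_bound_of_continuousOn hh
  exact Summable.tsum_le_tsum (Vterm_mono hN hx hg hh hle)
    (summable_Vterm hN hx hMg) (summable_Vterm hN hx hMh)

lemma V_smul (N : ℕ) (c : ℝ) (g : ℝ → ℝ) (x : ℝ) :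
    V N (fun y => c * g y) x = c * V N g x := by
  rw [V_eq_tsum, V_eq_tsum]
  have : ∀ k, Vterm N (fun y => c * g y) x k = c * Vterm N g x k := by
    intro k
    unfold Vterm
    rw [intervalIntegral.integral_const_mul]
    ring
  rw [tsum_congr this, tsum_mul_left]
  ring

lemma uNi_contOn {N : ℕ} (hN : 2 ≤ N) (k : ℕ) :
    ContinuousOn (fun x => uNi N (N + k) x) (Set.Icc (0:ℝ) 1) := by
  unfold uNi
  apply ContinuousOn.sub continuousOn_const
  apply ContinuousOn.div continuousOn_const
  · exact (continuous_add_right _).continuousOn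
  · intro x hx
    exact (hd_pos hN hx k).ne'

lemma Vterm_contOn {N : ℕ} (hN : 2 ≤ N) {g : ℝ → ℝ}
    (hg : ContinuousOn g (Set.Icc (0:ℝ) 1)) (k : ℕ) :
    ContinuousOn (fun x => Vterm N g x k) (Set.Icc (0:ℝ) 1) := by
  have hgI : IntegrableOn g (Set.Icc (0:ℝ) 1) volume := hg.integrableOn_Icc
  have hGI : IntegrableOn g (Set.uIcc (0:ℝ) 1) volume := by
    rwa [Set.uIcc_of_le zero_le_one]
  have contG : ContinuousOn (fun t => ∫ u in (0:ℝ)..t, g u) (Set.Icc (0:ℝ) 1) := by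
    have := intervalIntegral.continuousOn_primitive_interval (a := 0) (b := 1)
      (μ := volume) hGI
    rwa [Set.uIcc_of_le zero_le_one] at this
  have mapsto : ∀ j : ℕ, Set.MapsTo (fun x => uNi N (N + j) x)
      (Set.Icc (0:ℝ) 1) (Set.Icc (0:ℝ) 1) := fun j x hx => uNi_mem hN hx j
  have contu : ∀ j : ℕ, ContinuousOn (fun x => uNi N (N + j) x) (Set.Icc (0:ℝ) 1) :=
    uNi_contOn hN
  have contGu : ∀ j : ℕ, ContinuousOn (fun x => ∫ u in (0:ℝ)..(uNi N (N + j) x), g u)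
      (Set.Icc (0:ℝ) 1) := fun j => contG.comp (contu j) (mapsto j)
  have contgu : ContinuousOn (fun x => g (uNi N (N + k) x)) (Set.Icc (0:ℝ) 1) :=
    hg.comp (contu k) (mapsto k)
  have hIeq : ∀ x ∈ Set.Icc (0:ℝ) 1,
      (∫ u in (uNi N (N + k) x)..(uNi N (N + k + 1) x), g u)
        = (∫ u in (0:ℝ)..(uNi N (N + (k+1)) x), g u) - ∫ u in (0:ℝ)..(uNi N (N + k) x), g u := by
    intro x hx
    have h1 : IntervalIntegrable g volume 0 (uNi N (N + (k+1)) x) := by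
      apply (hg.mono _).intervalIntegrable
      rw [Set.uIcc_of_le (uNi_mem hN hx (k+1)).1]
      exact fun y hy => ⟨hy.1, le_trans hy.2 (uNi_mem hN hx (k+1)).2⟩
    have h2 : IntervalIntegrable g volume 0 (uNi N (N + k) x) := by
      apply (hg.mono _).intervalIntegrable
      rw [Set.uIcc_of_le (uNi_mem hN hx k).1]
      exact fun y hy => ⟨hy.1, le_trans hy.2 (uNi_mem hN hx k).2⟩
    exact (intervalIntegral.integral_interval_sub_left h1 h2).symm
  have contA : ContinuousOn
      (fun x => (((N + k : ℕ) : ℝ) + 1 - N) / (x + ((N + k : ℕ) : ℝ)) ^ 2)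
      (Set.Icc (0:ℝ) 1) := by
    apply ContinuousOn.div continuousOn_const
    · exact ((continuous_add_right _).pow 2).continuousOn
    · intro x hx
      exact pow_ne_zero 2 (hd_pos hN hx k).ne'
  have contB : ContinuousOn
      (fun x => ((N : ℝ) * (x + N - 1)) /
        ((x + ((N + k : ℕ) : ℝ) - 1) * (x + ((N + k : ℕ) : ℝ)) ^ 3))
      (Set.Icc (0:ℝ) 1) := by
    apply ContinuousOn.div
    · exact (continuous_const.mul ((continuous_add_right _).sub continuous_const)).continuousOn
    · exact (((continuous_add_right _).sub continuous_const).mul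
        ((continuous_add_right _).pow 3)).continuousOn
    · intro x hx
      have hd := hd_lb hN hx k
      have hk : (0:ℝ) ≤ (k:ℝ) := Nat.cast_nonneg k
      have h1 : (0:ℝ) < x + ((N + k : ℕ) : ℝ) - 1 := by linarith
      have h2 : (0:ℝ) < x + ((N + k : ℕ) : ℝ) := by linarith
      positivity
  apply ContinuousOn.congr
    (f := fun x => (((N + k : ℕ) : ℝ) + 1 - N) / (x + ((N + k : ℕ) : ℝ)) ^ 2
      * ((∫ u in (0:ℝ)..(uNi N (N + (k+1)) x), g u) - ∫ u in (0:ℝ)..(uNi N (N + k) x), g u)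
      + ((N : ℝ) * (x + N - 1)) /
          ((x + ((N + k : ℕ) : ℝ) - 1) * (x + ((N + k : ℕ) : ℝ)) ^ 3)
        * g (uNi N (N + k) x))
  · exact (contA.mul ((contGu (k+1)).sub (contGu k))).add (contB.mul contgu)
  · intro x hx
    show Vterm N g x k = _
    unfold Vterm
    rw [hIeq x hx]

lemma V_contOn {N : ℕ} (hN : 2 ≤ N) {g : ℝ → ℝ}
    (hg : ContinuousOn g (Set.Icc (0:ℝ) 1)) :
    ContinuousOn (V N g) (Set.Icc (0:ℝ) 1) := by
  obtain ⟨M, hM⟩ := isCompact_Icc.exists_bound_of_continuousOn hg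
  have huni := tendstoUniformlyOn_tsum (summable_bound (M * ((N:ℝ) + (N:ℝ)^2)))
    (fun k x hx => norm_Vterm_le hN hx hM k) (f := fun k x => Vterm N g x k)
  have hcont : ContinuousOn (fun x => ∑' k, Vterm N g x k) (Set.Icc (0:ℝ) 1) := by
    apply huni.continuousOn
    refine Filter.Frequently.of_forall fun t => ?_
    exact continuousOn_finset_sum t (fun k _ => Vterm_contOn hN hg k)
  have : V N g = fun x => -∑' k, Vterm N g x k := rfl
  rw [this]
  exact hcont.neg

theorem stmt17 (N : ℕ) (hN : 2 ≤ N) (v w : ℝ) (hv : 0 < v) (hvw : v ≤ w)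
    (φ : ℝ → ℝ) (hφc : ContinuousOn φ (Set.Icc (0:ℝ) 1))
    (hφ : ∀ x ∈ Set.Icc (0:ℝ) 1, φ x ≤ 0)
    (hVφ : ∀ x ∈ Set.Icc (0:ℝ) 1, v * (-φ x) ≤ V N φ x ∧ V N φ x ≤ w * (-φ x)) :
    ∀ n : ℕ, 1 ≤ n → ∀ x ∈ Set.Icc (0:ℝ) 1,
      v ^ n * (-φ x) ≤ (-1 : ℝ) ^ (n + 1) * (V N)^[n] φ x ∧
      (-1 : ℝ) ^ (n + 1) * (V N)^[n] φ x ≤ w ^ n * (-φ x) := by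
  have main : ∀ n : ℕ, 1 ≤ n →
      ContinuousOn ((V N)^[n] φ) (Set.Icc (0:ℝ) 1) ∧
      ∀ x ∈ Set.Icc (0:ℝ) 1,
        v ^ n * (-φ x) ≤ (-1 : ℝ) ^ (n + 1) * (V N)^[n] φ x ∧
        (-1 : ℝ) ^ (n + 1) * (V N)^[n] φ x ≤ w ^ n * (-φ x) := by
    intro n hn
    induction n, hn using Nat.le_induction with
    | base =>
      constructor
      · rw [Function.iterate_one]
        exact V_contOn hN hφc
      · intro x hx
        rw [Function.iterate_one]
        obtain ⟨h1, h2⟩ := hVφ x hx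
        norm_num
        constructor <;> linarith
    | succ n hn ih =>
      obtain ⟨ihc, ihb⟩ := ih
      have hgc : ContinuousOn ((V N)^[n] φ) (Set.Icc (0:ℝ) 1) := ihc
      have hhc : ContinuousOn (fun y => (-1:ℝ)^(n+1) * (V N)^[n] φ y) (Set.Icc (0:ℝ) 1) :=
        continuousOn_const.mul hgc
      have hlowc : ContinuousOn (fun y => (-(v^n)) * φ y) (Set.Icc (0:ℝ) 1) :=
        continuousOn_const.mul hφc
      have hupc : ContinuousOn (fun y => (-(w^n)) * φ y) (Set.Icc (0:ℝ) 1) :=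
        continuousOn_const.mul hφc
      have hle1 : ∀ y ∈ Set.Icc (0:ℝ) 1,
          (-(v^n)) * φ y ≤ (-1:ℝ)^(n+1) * (V N)^[n] φ y := by
        intro y hy
        have h := (ihb y hy).1
        nlinarith [h]
      have hle2 : ∀ y ∈ Set.Icc (0:ℝ) 1,
          (-1:ℝ)^(n+1) * (V N)^[n] φ y ≤ (-(w^n)) * φ y := by
        intro y hy
        have h := (ihb y hy).2
        nlinarith [h]
      have hcont' : ContinuousOn ((V N)^[n+1] φ) (Set.Icc (0:ℝ) 1) := by
        rw [Function.iterate_succ_apply']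
        exact V_contOn hN hgc
      refine ⟨hcont', ?_⟩
      intro x hx
      have m2 : V N (fun y => (-1:ℝ)^(n+1) * (V N)^[n] φ y) x
          ≤ V N (fun y => (-(v^n)) * φ y) x :=
        V_mono hN hx hlowc hhc hle1
      have m1 : V N (fun y => (-(w^n)) * φ y) x
          ≤ V N (fun y => (-1:ℝ)^(n+1) * (V N)^[n] φ y) x :=
        V_mono hN hx hhc hupc hle2
      have e1 : V N (fun y => (-(v^n)) * φ y) x = (-(v^n)) * V N φ x := V_smul N _ φ x
      have e2 : V N (fun y => (-(w^n)) * φ y) x = (-(w^n)) * V N φ x := V_smul N _ φ x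
      have e3 : V N (fun y => (-1:ℝ)^(n+1) * (V N)^[n] φ y) x
          = (-1:ℝ)^(n+1) * V N ((V N)^[n] φ) x := V_smul N _ _ x
      have eV : (V N)^[n+1] φ x = V N ((V N)^[n] φ) x := by
        rw [Function.iterate_succ_apply']
      obtain ⟨hb1, hb2⟩ := hVφ x hx
      have hvn : (0:ℝ) < v^n := pow_pos hv n
      have hwn : (0:ℝ) < w^n := pow_pos (lt_of_lt_of_le hv hvw) n
      have key1 : (-(v^n)) * V N φ x ≤ (-(v^n)) * (v * (-φ x)) :=
        mul_le_mul_of_nonpos_left hb1 (by linarith)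
      have key2 : (-(w^n)) * (w * (-φ x)) ≤ (-(w^n)) * V N φ x :=
        mul_le_mul_of_nonpos_left hb2 (by linarith)
      have epow : ((-1:ℝ))^(n+1+1) = -((-1:ℝ))^(n+1) := by
        rw [pow_succ]; ring
      rw [epow, eV]
      constructor
      · have : V N (fun y => (-1:ℝ)^(n+1) * (V N)^[n] φ y) x ≤ -(v^(n+1) * (-φ x)) := by
          rw [show -(v^(n+1) * (-φ x)) = (-(v^n)) * (v * (-φ x)) by ring]
          linarith [m2, e1, key1]
        rw [e3] at this
        linarith
      · have : -(w^(n+1) * (-φ x)) ≤ V N (fun y => (-1:ℝ)^(n+1) * (V N)^[n] φ y) x := by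
          rw [show -(w^(n+1) * (-φ x)) = (-(w^n)) * (w * (-φ x)) by ring]
          linarith [m1, e2, key2]
        rw [e3] at this
        linarith
  intro n hn
  exact (main n hn).2
end
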